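/- For a cube Q ⊂ ℝ³ of side length ℓ and every λ > 0, the Dirichlet eigenvalue counting function satisfies N_Q^D(λ) ≥ (ℓ³/(6π²))λ^{3/2} − (3√3 ℓ²/(6π))λ; moreover if λ > 3π²/ℓ² then N_Q^D(λ) ≥ (ℓ³/(6π²))λ^{3/2} − (3√3 ℓ²/(6π))λ + 1. -/

import Mathlib

open Real MeasureTheory Set
open scoped ENNReal

noncomputable section AuxCube3

/-- The counted set of triples. -/
def cubeS (μ : ℝ) : Set (ℕ × ℕ × ℕ) :=
  {t | 0 < t.1 ∧ 0 < t.2.1 ∧ 0 < t.2.2 ∧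
    ((t.1 : ℝ) ^ 2 + (t.2.1 : ℝ) ^ 2 + (t.2.2 : ℝ) ^ 2) < μ}

lemma cubeS_finite (μ : ℝ) : (cubeS μ).Finite := by
  have key : ∀ n : ℕ, (n : ℝ) ^ 2 < μ → n ≤ ⌈μ⌉₊ + 1 := by
    intro n h2
    have h1 : (n : ℝ) ≤ (n : ℝ) ^ 2 + 1 := by nlinarith [sq_nonneg ((n : ℝ) - 1)]
    have h3 : (n : ℝ) ≤ (⌈μ⌉₊ : ℝ) + 1 := by
      have := Nat.le_ceil μ
      linarith
    exact_mod_cast h3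
  have h : cubeS μ ⊆ Set.Iic (⌈μ⌉₊ + 1, ⌈μ⌉₊ + 1, ⌈μ⌉₊ + 1) := by
    rintro ⟨a, b, c⟩ ⟨_, _, _, hlt⟩
    have ha : (a : ℝ) ^ 2 < μ := by nlinarith [sq_nonneg (b : ℝ), sq_nonneg (c : ℝ)]
    have hb : (b : ℝ) ^ 2 < μ := by nlinarith [sq_nonneg (a : ℝ), sq_nonneg (c : ℝ)]
    have hc : (c : ℝ) ^ 2 < μ := by nlinarith [sq_nonneg (a : ℝ), sq_nonneg (b : ℝ)]
    exact ⟨key a ha, key b hb, key c hc⟩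
  exact (Set.finite_Iic _).subset h

/-- One-dimensional shell. -/
def cubeJ (n : ℕ) : Set ℝ := Icc (-(n : ℝ)) (-((n : ℝ) - 1)) ∪ Icc ((n : ℝ) - 1) n

lemma volume_cubeJ (n : ℕ) : volume (cubeJ n) ≤ 2 := by
  refine le_trans (measure_union_le _ _) ?_
  rw [Real.volume_Icc, Real.volume_Icc]
  have e1 : (-((n : ℝ) - 1)) - (-(n : ℝ)) = 1 := by ring
  have e2 : (n : ℝ) - ((n : ℝ) - 1) = 1 := by ring
  rw [e1, e2, ENNReal.ofReal_one]
  norm_num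

lemma mem_cubeJ (n : ℕ) (y : ℝ) (h1 : (n : ℝ) - 1 ≤ |y|) (h2 : |y| ≤ n) : y ∈ cubeJ n := by
  rcases abs_cases y with ⟨he, _⟩ | ⟨he, _⟩
  · right; exact ⟨by rw [← he]; exact h1, by rw [← he]; exact h2⟩
  · left
    constructor
    · have : -y ≤ (n : ℝ) := by rw [← he]; exact h2
      linarith
    · have : (n : ℝ) - 1 ≤ -y := by rw [← he]; exact h1
      linarith

lemma measurableSet_cubeJ (n : ℕ) : MeasurableSet (cubeJ n) :=
  (measurableSet_Icc).union measurableSet_Icc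

/-- Cube associated to a triple. -/
def cubeC (t : ℕ × ℕ × ℕ) : Set (EuclideanSpace ℝ (Fin 3)) :=
  ((MeasurableEquiv.toLp 2 (Fin 3 → ℝ)).symm) ⁻¹'
    (Set.univ.pi fun i => cubeJ (![t.1, t.2.1, t.2.2] i))

lemma volume_cubeC (t : ℕ × ℕ × ℕ) : volume (cubeC t) ≤ 8 := by
  unfold cubeC
  rw [(EuclideanSpace.volume_preserving_symm_measurableEquiv_toLp (Fin 3)).measure_preimage
    ((MeasurableSet.univ_pi fun i => measurableSet_cubeJ _).nullMeasurableSet)]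
  rw [volume_pi_pi]
  calc ∏ i : Fin 3, volume (cubeJ (![t.1, t.2.1, t.2.2] i))
      ≤ ∏ _i : Fin 3, (2 : ℝ≥0∞) := Finset.prod_le_prod' fun i _ => volume_cubeJ _
    _ = 8 := by simp [Fin.prod_univ_three]; norm_num

lemma ball_subset_cubes (μ : ℝ) :
    Metric.ball (0 : EuclideanSpace ℝ (Fin 3)) (Real.sqrt μ - Real.sqrt 3) ⊆
      ⋃ t ∈ (cubeS_finite μ).toFinset, cubeC t := by
  intro x hx
  have hx' : ‖x‖ < Real.sqrt μ - Real.sqrt 3 := by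
    simpa [Metric.mem_ball] using hx
  set a : Fin 3 → ℕ := fun i => ⌊|x i|⌋₊ + 1 with ha
  have hlow : ∀ i, (a i : ℝ) - 1 ≤ |x i| := by
    intro i
    simp only [ha, Nat.cast_add, Nat.cast_one, add_sub_cancel_right]
    exact Nat.floor_le (abs_nonneg _)
  have hupp : ∀ i, |x i| ≤ (a i : ℝ) := by
    intro i
    simp only [ha, Nat.cast_add, Nat.cast_one]
    exact (Nat.lt_floor_add_one _).le
  -- the key size bound
  set s : ℝ := ‖x‖ with hs
  have hs0 : 0 ≤ s := norm_nonneg _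
  have hnormsq : s ^ 2 = (x 0) ^ 2 + (x 1) ^ 2 + (x 2) ^ 2 := by
    rw [hs, EuclideanSpace.norm_eq, Real.sq_sqrt (by positivity)]
    simp [Fin.sum_univ_three, sq_abs]
  have hq : Real.sqrt 3 ^ 2 = 3 := Real.sq_sqrt (by norm_num)
  have hq0 : (0 : ℝ) < Real.sqrt 3 := Real.sqrt_pos.2 (by norm_num)
  have hsum_abs : |x 0| + |x 1| + |x 2| ≤ Real.sqrt 3 * s := by
    have h1 : (|x 0| + |x 1| + |x 2|) ^ 2 ≤ (Real.sqrt 3 * s) ^ 2 := by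
      rw [mul_pow, hq, hnormsq]
      nlinarith [sq_nonneg (|x 0| - |x 1|), sq_nonneg (|x 0| - |x 2|),
        sq_nonneg (|x 1| - |x 2|), sq_abs (x 0), sq_abs (x 1), sq_abs (x 2)]
    have h2 : 0 ≤ Real.sqrt 3 * s := by positivity
    nlinarith [abs_nonneg (x 0), abs_nonneg (x 1), abs_nonneg (x 2)]
  have hμpos : Real.sqrt 3 < Real.sqrt μ := by linarith
  have hmem : ((a 0, a 1, a 2) : ℕ × ℕ × ℕ) ∈ cubeS μ := by
    refine ⟨Nat.succ_pos _, Nat.succ_pos _, Nat.succ_pos _, ?_⟩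
    have hub : ∀ i, (a i : ℝ) ≤ |x i| + 1 := by
      intro i; have := hlow i; linarith
    have hsq : ∀ i, (a i : ℝ) ^ 2 ≤ (|x i| + 1) ^ 2 := by
      intro i
      have h0 : (0 : ℝ) ≤ (a i : ℝ) := Nat.cast_nonneg _
      nlinarith [hub i, abs_nonneg (x i)]
    have hμ : (s + Real.sqrt 3) ^ 2 < μ := by
      have hlt : s + Real.sqrt 3 < Real.sqrt μ := by linarith
      have := Real.sq_sqrt (le_of_lt (Real.sqrt_pos.1 (lt_trans hq0 hμpos)))
      nlinarith [Real.sqrt_nonneg μ]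
    have expand : (|x 0| + 1) ^ 2 + (|x 1| + 1) ^ 2 + (|x 2| + 1) ^ 2
        ≤ (s + Real.sqrt 3) ^ 2 := by
      have e : s ^ 2 = |x 0| ^ 2 + |x 1| ^ 2 + |x 2| ^ 2 := by
        rw [hnormsq, sq_abs, sq_abs, sq_abs]
      nlinarith [hsum_abs]
    calc ((a 0 : ℝ)) ^ 2 + (a 1 : ℝ) ^ 2 + (a 2 : ℝ) ^ 2
        ≤ (|x 0| + 1) ^ 2 + (|x 1| + 1) ^ 2 + (|x 2| + 1) ^ 2 := by
          have := hsq 0; have := hsq 1; have := hsq 2; linarith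
      _ ≤ (s + Real.sqrt 3) ^ 2 := expand
      _ < μ := hμ
  refine Set.mem_biUnion ((cubeS_finite μ).mem_toFinset.2 hmem) ?_
  intro i _
  fin_cases i
  · exact mem_cubeJ _ _ (hlow 0) (hupp 0)
  · exact mem_cubeJ _ _ (hlow 1) (hupp 1)
  · exact mem_cubeJ _ _ (hlow 2) (hupp 2)

lemma cube_count (μ : ℝ) :
    π / 6 * (Real.sqrt μ - Real.sqrt 3) ^ 3 ≤ (Nat.card (cubeS μ) : ℝ) := by
  set r := Real.sqrt μ - Real.sqrt 3 with hr
  have hN : (Nat.card (cubeS μ) : ℝ) = ((cubeS_finite μ).toFinset.card : ℝ) := by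
    rw [Nat.card_coe_set_eq, Set.ncard_eq_toFinset_card _ (cubeS_finite μ)]
  rcases le_or_gt r 0 with h | h
  · have h3 : r ^ 3 ≤ 0 := Odd.pow_nonpos ⟨1, by norm_num⟩ h
    have : π / 6 * r ^ 3 ≤ 0 := mul_nonpos_of_nonneg_of_nonpos (by positivity) h3
    have : (0:ℝ) ≤ (Nat.card (cubeS μ) : ℝ) := Nat.cast_nonneg _
    linarith
  · -- volume argument
    have hball : volume (Metric.ball (0 : EuclideanSpace ℝ (Fin 3)) r)
        ≤ ((cubeS_finite μ).toFinset.card : ℝ≥0∞) * 8 := by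
      calc volume (Metric.ball (0 : EuclideanSpace ℝ (Fin 3)) r)
          ≤ volume (⋃ t ∈ (cubeS_finite μ).toFinset, cubeC t) :=
            measure_mono (ball_subset_cubes μ)
        _ ≤ ∑ t ∈ (cubeS_finite μ).toFinset, volume (cubeC t) :=
            measure_biUnion_finset_le _ _
        _ ≤ ∑ _t ∈ (cubeS_finite μ).toFinset, (8 : ℝ≥0∞) :=
            Finset.sum_le_sum fun t _ => volume_cubeC t
        _ = ((cubeS_finite μ).toFinset.card : ℝ≥0∞) * 8 := by
            rw [Finset.sum_const, nsmul_eq_mul]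
    have hvol : volume (Metric.ball (0 : EuclideanSpace ℝ (Fin 3)) r)
        = ENNReal.ofReal (4 * π / 3 * r ^ 3) := by
      rw [EuclideanSpace.volume_ball, Fintype.card_fin]
      have hg : Real.Gamma ((3 : ℕ) / 2 + 1) = 3 / 4 * Real.sqrt π := by
        have h1 : ((3 : ℕ) : ℝ) / 2 + 1 = 3 / 2 + 1 := by norm_num
        rw [h1, Real.Gamma_add_one (by norm_num)]
        have h2 : (3 : ℝ) / 2 = 1 / 2 + 1 := by norm_num
        rw [h2, Real.Gamma_add_one (by norm_num), Real.Gamma_one_half_eq]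
        ring
      have hsp : Real.sqrt π ^ 3 = π * Real.sqrt π := by
        rw [pow_succ, Real.sq_sqrt Real.pi_pos.le]
      have hsp0 : (0 : ℝ) < Real.sqrt π := Real.sqrt_pos.2 Real.pi_pos
      have hc : Real.sqrt π ^ 3 / Real.Gamma ((3 : ℕ) / 2 + 1) = 4 * π / 3 := by
        rw [hg, hsp]; field_simp
      rw [hc, ← ENNReal.ofReal_pow h.le, ← ENNReal.ofReal_mul (by positivity)]
      ring_nf
    rw [hvol] at hball
    have h8 : ((cubeS_finite μ).toFinset.card : ℝ≥0∞) * 8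
        = ENNReal.ofReal (((cubeS_finite μ).toFinset.card : ℝ) * 8) := by
      rw [ENNReal.ofReal_mul (by positivity), ENNReal.ofReal_natCast]
      norm_num
    rw [h8] at hball
    have hreal : 4 * π / 3 * r ^ 3 ≤ ((cubeS_finite μ).toFinset.card : ℝ) * 8 :=
      (ENNReal.ofReal_le_ofReal_iff (by positivity)).1 hball
    rw [hN]
    nlinarith [Real.pi_pos]

lemma cubeS_card_pos (μ : ℝ) (h3 : (3 : ℝ) < μ) : (1 : ℝ) ≤ (Nat.card (cubeS μ) : ℝ) := by
  have hmem : ((1, 1, 1) : ℕ × ℕ × ℕ) ∈ cubeS μ := by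
    refine ⟨one_pos, one_pos, one_pos, ?_⟩
    norm_num
    linarith
  have : 0 < Nat.card (cubeS μ) := by
    have : Nonempty (cubeS μ) := ⟨⟨_, hmem⟩⟩
    have : Finite (cubeS μ) := (cubeS_finite μ)
    exact Nat.card_pos
  exact_mod_cast this

end AuxCube3

open Real

set_option maxHeartbeats 1000000 in
theorem cube3_counting_lower (ℓ Λ : ℝ) (hℓ : 0 < ℓ) (hΛ : 0 < Λ) :
    (ℓ ^ 3 / (6 * π ^ 2) * Λ ^ ((3 : ℝ) / 2) - 3 * Real.sqrt 3 * ℓ ^ 2 / (6 * π) * Λ ≤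
      (Nat.card {t : ℕ × ℕ × ℕ // 0 < t.1 ∧ 0 < t.2.1 ∧ 0 < t.2.2 ∧
          π ^ 2 * ((t.1 : ℝ) ^ 2 + (t.2.1 : ℝ) ^ 2 + (t.2.2 : ℝ) ^ 2) / ℓ ^ 2 < Λ} : ℝ)) ∧
    (3 * π ^ 2 / ℓ ^ 2 < Λ →
      ℓ ^ 3 / (6 * π ^ 2) * Λ ^ ((3 : ℝ) / 2) - 3 * Real.sqrt 3 * ℓ ^ 2 / (6 * π) * Λ + 1 ≤
        (Nat.card {t : ℕ × ℕ × ℕ // 0 < t.1 ∧ 0 < t.2.1 ∧ 0 < t.2.2 ∧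
            π ^ 2 * ((t.1 : ℝ) ^ 2 + (t.2.1 : ℝ) ^ 2 + (t.2.2 : ℝ) ^ 2) / ℓ ^ 2 < Λ} : ℝ)) := by
  have hπ : (0 : ℝ) < π := Real.pi_pos
  obtain ⟨μ, hμ⟩ : ∃ μ : ℝ, μ = Λ * ℓ ^ 2 / π ^ 2 := ⟨_, rfl⟩
  have hμpos : 0 < μ := by rw [hμ]; positivity
  -- identify the two counting sets
  have hiff : ∀ t : ℕ × ℕ × ℕ,
      (0 < t.1 ∧ 0 < t.2.1 ∧ 0 < t.2.2 ∧
        π ^ 2 * ((t.1 : ℝ) ^ 2 + (t.2.1 : ℝ) ^ 2 + (t.2.2 : ℝ) ^ 2) / ℓ ^ 2 < Λ)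
      ↔ t ∈ cubeS μ := by
    intro t
    have h1 : π ^ 2 * ((t.1 : ℝ) ^ 2 + (t.2.1 : ℝ) ^ 2 + (t.2.2 : ℝ) ^ 2) / ℓ ^ 2 < Λ
        ↔ ((t.1 : ℝ) ^ 2 + (t.2.1 : ℝ) ^ 2 + (t.2.2 : ℝ) ^ 2) < μ := by
      rw [div_lt_iff₀ (by positivity), hμ, lt_div_iff₀ (by positivity)]
      constructor <;> intro h <;> nlinarith
    unfold cubeS
    simp only [Set.mem_setOf_eq]
    tauto
  have hcard : (Nat.card {t : ℕ × ℕ × ℕ // 0 < t.1 ∧ 0 < t.2.1 ∧ 0 < t.2.2 ∧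
      π ^ 2 * ((t.1 : ℝ) ^ 2 + (t.2.1 : ℝ) ^ 2 + (t.2.2 : ℝ) ^ 2) / ℓ ^ 2 < Λ} : ℕ)
      = Nat.card (cubeS μ) :=
    Nat.card_congr (Equiv.subtypeEquivRight hiff)
  -- basic quantities
  obtain ⟨s, hsdef⟩ : ∃ s : ℝ, s = Real.sqrt Λ := ⟨_, rfl⟩
  have hs0 : 0 < s := hsdef ▸ Real.sqrt_pos.2 hΛ
  have hs2 : s ^ 2 = Λ := hsdef ▸ Real.sq_sqrt hΛ.le
  obtain ⟨q, hqdef⟩ : ∃ q : ℝ, q = Real.sqrt 3 := ⟨_, rfl⟩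
  rw [show Real.sqrt 3 = q from hqdef.symm]
  have hq0 : (0 : ℝ) < q := hqdef ▸ Real.sqrt_pos.2 (by norm_num)
  have hq2 : q ^ 2 = 3 := hqdef ▸ Real.sq_sqrt (by norm_num)
  have hq1 : (1 : ℝ) ≤ q := by nlinarith
  obtain ⟨R, hRdef⟩ : ∃ R : ℝ, R = s * ℓ / π := ⟨_, rfl⟩
  have hR0 : 0 < R := by rw [hRdef]; exact div_pos (mul_pos hs0 hℓ) hπ
  have hsqrtμ : Real.sqrt μ = R := by
    have h1 : μ = R ^ 2 := by rw [hμ, hRdef, div_pow, mul_pow, hs2]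
    rw [h1, Real.sqrt_sq hR0.le]
  have hrpow : Λ ^ ((3 : ℝ) / 2) = s ^ 3 := by
    rw [hsdef]
    rw [ Real.sqrt_eq_rpow, ← Real.rpow_natCast (Λ ^ ((1 : ℝ) / 2)) 3,
      ← Real.rpow_mul hΛ.le]
    norm_num
  -- the target expressed via R
  have id1 : ℓ ^ 3 / (6 * π ^ 2) * Λ ^ ((3 : ℝ) / 2) = π / 6 * R ^ 3 := by
    rw [hrpow, hRdef]; field_simp
  have id2 : 3 * q * ℓ ^ 2 / (6 * π) * Λ = q * π / 2 * R ^ 2 := by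
    rw [← hs2, hRdef]; field_simp; ring
  have hcount := cube_count μ
  rw [hsqrtμ, ← hqdef] at hcount
  have hNcast : (Nat.card {t : ℕ × ℕ × ℕ // 0 < t.1 ∧ 0 < t.2.1 ∧ 0 < t.2.2 ∧
      π ^ 2 * ((t.1 : ℝ) ^ 2 + (t.2.1 : ℝ) ^ 2 + (t.2.2 : ℝ) ^ 2) / ℓ ^ 2 < Λ} : ℝ)
      = (Nat.card (cubeS μ) : ℝ) := by exact_mod_cast hcard
  have hNnn : (0 : ℝ) ≤ (Nat.card (cubeS μ) : ℝ) := Nat.cast_nonneg _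
  have hexp : (R - q) ^ 3 = R ^ 3 - 3 * q * R ^ 2 + 9 * R - 3 * q := by
    have e : (R - q) ^ 3 = R ^ 3 - 3 * q * R ^ 2 + 3 * q ^ 2 * R - q ^ 2 * q := by ring
    rw [e, hq2]; ring
  have hsmall : R ≤ 3 * q → π / 6 * R ^ 3 - q * π / 2 * R ^ 2 ≤ 0 := by
    intro hcase
    have h1 : R ^ 3 ≤ 3 * q * R ^ 2 := by nlinarith [sq_nonneg R]
    have h2 : π / 6 * R ^ 3 ≤ π / 6 * (3 * q * R ^ 2) :=
      mul_le_mul_of_nonneg_left h1 (by positivity)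
    linarith
  have hbig : 3 * q < R → π / 6 * R ^ 3 - q * π / 2 * R ^ 2 ≤ π / 6 * (R - q) ^ 3 := by
    intro hcase
    have h9 : (0 : ℝ) ≤ 9 * R - 3 * q := by nlinarith
    have hA : (0 : ℝ) ≤ π / 6 * (9 * R - 3 * q) := by positivity
    rw [hexp]
    nlinarith [hA]
  constructor
  · rw [hNcast, id1, id2]
    rcases le_or_gt R (3 * q) with hcase | hcase
    · linarith [hsmall hcase]
    · linarith [hbig hcase, hcount]
  · intro hΛ'
    have h3μ : (3 : ℝ) < μ := by
      rw [hμ, lt_div_iff₀ (by positivity)]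
      rw [div_lt_iff₀ (by positivity)] at hΛ'
      nlinarith
    have hone := cubeS_card_pos μ h3μ
    rw [hNcast, id1, id2]
    rcases le_or_gt R (3 * q) with hcase | hcase
    · linarith [hsmall hcase]
    · have hπ3 : (3 : ℝ) < π := by linarith [Real.pi_gt_three]
      have h9 : 24 * q ≤ 9 * R - 3 * q := by linarith
      have hpq : (3 : ℝ) ≤ π * q := by nlinarith
      have hB : π * (24 * q) ≤ π * (9 * R - 3 * q) :=
        mul_le_mul_of_nonneg_left h9 hπ.le
      have hone' : (1 : ℝ) ≤ π / 6 * (9 * R - 3 * q) := by nlinarith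
      have := hbig hcase
      rw [hexp] at this
      nlinarith [hcount, hexp]
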